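/- Under the assumptions of the previous Green's identity, if additionally $u_\nu$ is constant on $\Gamma_0$, then $u_\nu = \frac{N|\Sigma\cap\Omega|}{|\Gamma_0|}$ on $\Gamma_0$, and consequently for every harmonic $h$ with $h_\nu = 0$ on $\Gamma_1$ one has the mean value identity $\frac{1}{|\Sigma\cap\Omega|}\int_{\Sigma\cap\Omega} h\,dx = \frac{1}{|\Gamma_0|}\int_{\Gamma_0} h\,dS_x$. -/

import Mathlib

open MeasureTheory
open scoped ENNReal RealInnerProductSpace

/-- Implication (i) ⟹ (ii) of the Duality Theorem: if `u_ν` is constant on `Γ₀`,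
then the constant equals `N|G|/|Γ₀|` (by the divergence theorem `hGreen1`), and for
every harmonic `h` with `h_ν = 0` on `Γ₁` (for which the Green identity `hGreenh`
holds) one has the mean value identity
`(1/|G|) ∫_G h dx = (1/|Γ₀|) ∫_{Γ₀} h dS`. -/
theorem duality_i_implies_ii {N : ℕ} (hN : 1 ≤ N)
    {G Γ₀ : Set (EuclideanSpace ℝ (Fin N))}
    (hΓ₀meas : MeasurableSet Γ₀)
    (hΓ₀pos : 0 < μH[(N : ℝ) - 1] Γ₀) (hΓ₀fin : μH[(N : ℝ) - 1] Γ₀ < ⊤)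
    (hGpos : 0 < volume G) (hGfin : volume G < ⊤)
    {u h : EuclideanSpace ℝ (Fin N) → ℝ}
    {ν : EuclideanSpace ℝ (Fin N) → EuclideanSpace ℝ (Fin N)}
    {c : ℝ} (hconst : ∀ x ∈ Γ₀, ⟪gradient u x, ν x⟫ = c)
    (hinth : IntegrableOn h Γ₀ μH[(N : ℝ) - 1])
    (hGreen1 : (N : ℝ) * (volume G).toReal
      = ∫ x in Γ₀, ⟪gradient u x, ν x⟫ ∂μH[(N : ℝ) - 1])
    (hGreenh : ∫ x in G, h x
      = (1 / (N : ℝ)) * ∫ x in Γ₀, ⟪gradient u x, ν x⟫ * h x ∂μH[(N : ℝ) - 1]) :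
    c = (N : ℝ) * (volume G).toReal / (μH[(N : ℝ) - 1] Γ₀).toReal ∧
    (volume G).toReal⁻¹ * ∫ x in G, h x
      = (μH[(N : ℝ) - 1] Γ₀).toReal⁻¹ * ∫ x in Γ₀, h x ∂μH[(N : ℝ) - 1] := by
  set m := (μH[(N : ℝ) - 1] Γ₀).toReal with hm
  have hmpos : 0 < m := ENNReal.toReal_pos hΓ₀pos.ne' hΓ₀fin.ne
  have hvpos : 0 < (volume G).toReal := ENNReal.toReal_pos hGpos.ne' hGfin.ne
  have hNpos : (0 : ℝ) < N := by exact_mod_cast hN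
  have h1 : (∫ x in Γ₀, ⟪gradient u x, ν x⟫ ∂μH[(N : ℝ) - 1]) = m * c := by
    rw [setIntegral_congr_fun hΓ₀meas hconst, setIntegral_const, smul_eq_mul, measureReal_def]
  have hc : c = (N : ℝ) * (volume G).toReal / m := by
    rw [eq_div_iff hmpos.ne', hGreen1, h1, mul_comm]
  refine ⟨hc, ?_⟩
  have h2 : (∫ x in Γ₀, ⟪gradient u x, ν x⟫ * h x ∂μH[(N : ℝ) - 1])
      = c * ∫ x in Γ₀, h x ∂μH[(N : ℝ) - 1] := by
    rw [setIntegral_congr_fun hΓ₀meas (fun x hx => by rw [hconst x hx]),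
      integral_const_mul]
  rw [hGreenh, h2, hc]
  field_simp
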